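/- Let K₁, K₂ be Markov kernels on a finite set S, γ ∈ [0,1), and φ : S → ℝ^d with ‖φ(s)‖ ≤ C. Let ψ₁, ψ₂ be the successor feature maps under K₁ and K₂ respectively. Then sup_s ‖ψ₁(s) − ψ₂(s)‖ ≤ (γ·C/(1−γ)²)·sup_s ‖K₁(s,·) − K₂(s,·)‖_{TV'}, where ‖p − q‖_{TV'} = ∑_{s'} |p(s') − q(s')|. -/

import Mathlib

lemma pow_row_stoch {S : Type*} [Fintype S] [DecidableEq S] (K : Matrix S S ℝ)
    (hnn : ∀ s s', 0 ≤ K s s') (hsum : ∀ s, ∑ s', K s s' = 1) :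
    ∀ t : ℕ, (∀ s s', 0 ≤ (K ^ t) s s') ∧ (∀ s, ∑ s', (K ^ t) s s' = 1) := by
  intro t
  induction t with
  | zero =>
    constructor
    · intro s s'
      simp only [pow_zero, Matrix.one_apply]
      split <;> norm_num
    · intro s
      simp [Matrix.one_apply]
  | succ n ih =>
    obtain ⟨ih1, ih2⟩ := ih
    constructor
    · intro s s'
      rw [pow_succ, Matrix.mul_apply]
      exact Finset.sum_nonneg fun u _ => mul_nonneg (ih1 s u) (hnn u s')
    · intro s
      simp only [pow_succ, Matrix.mul_apply]
      rw [Finset.sum_comm]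
      calc ∑ u, ∑ s', (K ^ n) s u * K u s'
          = ∑ u, (K ^ n) s u * ∑ s', K u s' := by simp [Finset.mul_sum]
        _ = 1 := by simp [hsum, ih2]

lemma pow_rowdiff {S : Type*} [Fintype S] [DecidableEq S] (K1 K2 : Matrix S S ℝ)
    (hK1nn : ∀ s s', 0 ≤ K1 s s') (hK1sum : ∀ s, ∑ s', K1 s s' = 1)
    (hK2nn : ∀ s s', 0 ≤ K2 s s') (hK2sum : ∀ s, ∑ s', K2 s s' = 1)
    (ε : ℝ) (hε : ∀ s, ∑ s', |K1 s s' - K2 s s'| ≤ ε) :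
    ∀ t : ℕ, ∀ s, ∑ s', |(K1 ^ t) s s' - (K2 ^ t) s s'| ≤ t * ε := by
  intro t
  induction t with
  | zero => intro s; simp
  | succ n ih =>
    intro s
    have key : ∀ s', (K1 ^ (n+1)) s s' - (K2 ^ (n+1)) s s'
        = ∑ u, K1 s u * ((K1 ^ n) u s' - (K2 ^ n) u s')
          + ∑ u, (K1 s u - K2 s u) * (K2 ^ n) u s' := by
      intro s'
      rw [pow_succ', pow_succ', Matrix.mul_apply, Matrix.mul_apply,
        ← Finset.sum_add_distrib]
      rw [← Finset.sum_sub_distrib]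
      apply Finset.sum_congr rfl
      intro u _
      ring
    calc ∑ s', |(K1 ^ (n+1)) s s' - (K2 ^ (n+1)) s s'|
        ≤ ∑ s', (∑ u, K1 s u * |(K1 ^ n) u s' - (K2 ^ n) u s'|
                 + ∑ u, |K1 s u - K2 s u| * (K2 ^ n) u s') := by
          apply Finset.sum_le_sum; intro s' _
          rw [key s']
          refine (abs_add_le _ _).trans (add_le_add ?_ ?_)
          · refine (Finset.abs_sum_le_sum_abs _ _).trans ?_
            apply Finset.sum_le_sum; intro u _
            rw [abs_mul, abs_of_nonneg (hK1nn s u)]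
          · refine (Finset.abs_sum_le_sum_abs _ _).trans ?_
            apply Finset.sum_le_sum; intro u _
            rw [abs_mul, abs_of_nonneg ((pow_row_stoch K2 hK2nn hK2sum n).1 u s')]
      _ = ∑ u, K1 s u * (∑ s', |(K1 ^ n) u s' - (K2 ^ n) u s'|)
          + ∑ u, |K1 s u - K2 s u| * (∑ s', (K2 ^ n) u s') := by
          rw [Finset.sum_add_distrib]
          congr 1
          · rw [Finset.sum_comm]; simp_rw [Finset.mul_sum]
          · rw [Finset.sum_comm]; simp_rw [Finset.mul_sum]
      _ ≤ ∑ u, K1 s u * (n * ε) + ∑ u, |K1 s u - K2 s u| * 1 := by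
          apply add_le_add
          · exact Finset.sum_le_sum fun u _ =>
              mul_le_mul_of_nonneg_left (ih u) (hK1nn s u)
          · apply Finset.sum_le_sum; intro u _
            rw [(pow_row_stoch K2 hK2nn hK2sum n).2 u]
      _ = n * ε + ∑ u, |K1 s u - K2 s u| := by
          rw [← Finset.sum_mul, hK1sum s]; simp
      _ ≤ n * ε + ε := by exact add_le_add_right (hε s) _
      _ = (n + 1 : ℕ) * ε := by push_cast; ring

/-- Continuity of successor features in the kernel:
`sup_s ‖ψ₁(s) − ψ₂(s)‖ ≤ (γ·C/(1−γ)²)·sup_s ∑_{s'} |K₁(s,s') − K₂(s,s')|`. -/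
theorem sf_kernel_lipschitz (S : Type*) [Fintype S] [DecidableEq S] [Nonempty S] (d : ℕ)
    (γ : ℝ) (hγ0 : 0 ≤ γ) (hγ1 : γ < 1)
    (K1 K2 : Matrix S S ℝ)
    (hK1nn : ∀ s s', 0 ≤ K1 s s') (hK1sum : ∀ s, ∑ s', K1 s s' = 1)
    (hK2nn : ∀ s s', 0 ≤ K2 s s') (hK2sum : ∀ s, ∑ s', K2 s s' = 1)
    (φ : S → EuclideanSpace ℝ (Fin d)) (C : ℝ) (hC : ∀ s, ‖φ s‖ ≤ C)
    (ψ1 ψ2 : S → EuclideanSpace ℝ (Fin d))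
    (hψ1 : ∀ s, ψ1 s = ∑' t : ℕ, γ ^ t • ∑ s', (K1 ^ t) s s' • φ s')
    (hψ2 : ∀ s, ψ2 s = ∑' t : ℕ, γ ^ t • ∑ s', (K2 ^ t) s s' • φ s') :
    ∀ s, ‖ψ1 s - ψ2 s‖
      ≤ γ * C / (1 - γ) ^ 2 *
        (Finset.univ.sup' Finset.univ_nonempty fun s => ∑ s', |K1 s s' - K2 s s'|) := by
  intro s
  set ε : ℝ := Finset.univ.sup' Finset.univ_nonempty fun s => ∑ s', |K1 s s' - K2 s s'| with hεdef
  obtain ⟨s₀⟩ := ‹Nonempty S›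
  have hC0 : 0 ≤ C := le_trans (norm_nonneg _) (hC s₀)
  have hε : ∀ s, ∑ s', |K1 s s' - K2 s s'| ≤ ε := fun s =>
    Finset.le_sup' (fun s => ∑ s', |K1 s s' - K2 s s'|) (Finset.mem_univ s)
  have hε0 : 0 ≤ ε :=
    le_trans (Finset.sum_nonneg fun _ _ => abs_nonneg _) (hε s₀)
  have hrd := pow_rowdiff K1 K2 hK1nn hK1sum hK2nn hK2sum ε hε
  have hps := fun (K : Matrix S S ℝ) hnn hsum => pow_row_stoch K hnn hsum
  -- norm bound on the per-step vectors
  have hv : ∀ (K : Matrix S S ℝ), (∀ s s', 0 ≤ K s s') → (∀ s, ∑ s', K s s' = 1) →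
      ∀ t : ℕ, ∀ s, ‖∑ s', (K ^ t) s s' • φ s'‖ ≤ C := by
    intro K hnn hsum t s
    calc ‖∑ s', (K ^ t) s s' • φ s'‖ ≤ ∑ s', ‖(K ^ t) s s' • φ s'‖ :=
          norm_sum_le _ _
      _ ≤ ∑ s', (K ^ t) s s' * C := by
          apply Finset.sum_le_sum; intro u _
          rw [norm_smul, Real.norm_eq_abs,
            abs_of_nonneg ((hps K hnn hsum t).1 s u)]
          exact mul_le_mul_of_nonneg_left (hC u) ((hps K hnn hsum t).1 s u)
      _ = C := by rw [← Finset.sum_mul, (hps K hnn hsum t).2 s, one_mul]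
  have hsummable : ∀ (K : Matrix S S ℝ), (∀ s s', 0 ≤ K s s') →
      (∀ s, ∑ s', K s s' = 1) →
      Summable fun t : ℕ => γ ^ t • ∑ s', (K ^ t) s s' • φ s' := by
    intro K hnn hsum
    apply Summable.of_norm_bounded
      ((summable_geometric_of_lt_one hγ0 hγ1).mul_left C)
    intro t
    rw [norm_smul, Real.norm_eq_abs, abs_of_nonneg (pow_nonneg hγ0 t)]
    rw [mul_comm]
    exact mul_le_mul_of_nonneg_right (hv K hnn hsum t s) (pow_nonneg hγ0 t)
  have h1 := hsummable K1 hK1nn hK1sum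
  have h2 := hsummable K2 hK2nn hK2sum
  have hdiff : ψ1 s - ψ2 s
      = ∑' t : ℕ, (γ ^ t • ∑ s', (K1 ^ t) s s' • φ s'
          - γ ^ t • ∑ s', (K2 ^ t) s s' • φ s') := by
    rw [hψ1 s, hψ2 s, Summable.tsum_sub h1 h2]
  -- termwise norm bound
  have hterm : ∀ t : ℕ, ‖γ ^ t • ∑ s', (K1 ^ t) s s' • φ s'
      - γ ^ t • ∑ s', (K2 ^ t) s s' • φ s'‖ ≤ ε * C * ((t : ℝ) * γ ^ t) := by
    intro t
    rw [← smul_sub, norm_smul, Real.norm_eq_abs, abs_of_nonneg (pow_nonneg hγ0 t)]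
    have : (∑ s', (K1 ^ t) s s' • φ s') - ∑ s', (K2 ^ t) s s' • φ s'
        = ∑ s', ((K1 ^ t) s s' - (K2 ^ t) s s') • φ s' := by
      rw [← Finset.sum_sub_distrib]
      exact Finset.sum_congr rfl fun u _ => (sub_smul _ _ _).symm
    rw [this]
    have hn : ‖∑ s', ((K1 ^ t) s s' - (K2 ^ t) s s') • φ s'‖ ≤ t * ε * C := by
      calc ‖∑ s', ((K1 ^ t) s s' - (K2 ^ t) s s') • φ s'‖
          ≤ ∑ s', ‖((K1 ^ t) s s' - (K2 ^ t) s s') • φ s'‖ := norm_sum_le _ _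
        _ ≤ ∑ s', |(K1 ^ t) s s' - (K2 ^ t) s s'| * C := by
            apply Finset.sum_le_sum; intro u _
            rw [norm_smul, Real.norm_eq_abs]
            exact mul_le_mul_of_nonneg_left (hC u) (abs_nonneg _)
        _ = (∑ s', |(K1 ^ t) s s' - (K2 ^ t) s s'|) * C := (Finset.sum_mul _ _ _).symm
        _ ≤ t * ε * C := mul_le_mul_of_nonneg_right (hrd t s) hC0
    calc γ ^ t * ‖∑ s', ((K1 ^ t) s s' - (K2 ^ t) s s') • φ s'‖
        ≤ γ ^ t * (t * ε * C) := mul_le_mul_of_nonneg_left hn (pow_nonneg hγ0 t)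
      _ = ε * C * ((t : ℝ) * γ ^ t) := by ring
  have hγn : ‖γ‖ < 1 := by rwa [Real.norm_eq_abs, abs_of_nonneg hγ0]
  have hgsum : Summable fun t : ℕ => ε * C * ((t : ℝ) * γ ^ t) := by
    have := summable_pow_mul_geometric_of_norm_lt_one (R := ℝ) 1 hγn
    simp only [pow_one] at this
    exact this.mul_left _
  calc ‖ψ1 s - ψ2 s‖
      ≤ ∑' t : ℕ, ε * C * ((t : ℝ) * γ ^ t) := by
        rw [hdiff]
        exact tsum_of_norm_bounded hgsum.hasSum hterm
    _ = ε * C * ∑' t : ℕ, (t : ℝ) * γ ^ t := tsum_mul_left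
    _ = ε * C * (γ / (1 - γ) ^ 2) := by
        rw [tsum_coe_mul_geometric_of_norm_lt_one hγn]
    _ = γ * C / (1 - γ) ^ 2 * ε := by ring
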